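/- Let n be a natural number with n ≡ 3 (mod 8). Let R₁ be the number of triples (a,b,c) of nonnegative integers with n = a² + b² + c², and let R₂ be the number of pairs (a,b) of nonnegative integers with n = a² + 2b². If 4 divides R₁ and 4 divides R₂, then n does not belong to B. -/

import Mathlib

open PowerSeries
open Finset
open scoped Classical
set_option maxHeartbeats 2000000

/-- `g = ∑_{n ≥ 0} x^{n²}` in `(ℤ/2ℤ)[[x]]`: the coefficient of `x^m` is `1`
exactly when `m` is a perfect square. -/
noncomputable def g : PowerSeries (ZMod 2) :=
  PowerSeries.mk fun m => if IsSquare m then 1 else 0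

/-- `B` is the set of `n` for which the coefficient of `x^n` in `1/g` equals `1`. -/
noncomputable def B : Set ℕ := {n | PowerSeries.coeff (R := ZMod 2) n g⁻¹ = 1}

private lemma zmod2_mul_self (a : ZMod 2) : a * a = a := by fin_cases a <;> rfl

instance : CharP (PowerSeries (ZMod 2)) 2 :=
  charP_of_injective_ringHom (f := C (R := ZMod 2))
    (fun a b h => by simpa using congrArg (constantCoeff (R := ZMod 2)) h) 2

private lemma coeff_mul_self (f : PowerSeries (ZMod 2)) (m : ℕ) :
    coeff (R := ZMod 2) m (f * f) = if 2 ∣ m then coeff (R := ZMod 2) (m / 2) f else 0 := by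
  rw [coeff_mul]
  rw [← Finset.sum_filter_add_sum_filter_not (Finset.HasAntidiagonal.antidiagonal m) (fun p => p.1 = p.2)]
  have h2 : ∑ p ∈ (Finset.HasAntidiagonal.antidiagonal m).filter (fun p => ¬ p.1 = p.2),
      coeff (R := ZMod 2) p.1 f * coeff (R := ZMod 2) p.2 f = 0 := by
    apply Finset.sum_involution (fun p _ => (p.2, p.1))
    · intro a ha
      rw [mul_comm]
      exact CharTwo.add_self_eq_zero _
    · intro a ha _
      simp only [Finset.mem_filter] at ha
      intro hc
      exact ha.2 (congrArg Prod.snd hc)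
    · intro a ha
      simp only [Finset.mem_filter, Finset.HasAntidiagonal.mem_antidiagonal] at ha ⊢
      omega
    · intro a ha; rfl
  rw [h2, add_zero]
  by_cases h : 2 ∣ m
  · obtain ⟨k, rfl⟩ := h
    have : (Finset.HasAntidiagonal.antidiagonal (2*k)).filter (fun p : ℕ × ℕ => p.1 = p.2) = {(k,k)} := by
      ext p
      simp only [Finset.mem_filter, Finset.HasAntidiagonal.mem_antidiagonal, Finset.mem_singleton, Prod.ext_iff]
      omega
    rw [this, Finset.sum_singleton, zmod2_mul_self]
    simp [Nat.mul_div_cancel_left k (by norm_num : 0 < 2)]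
  · have : (Finset.HasAntidiagonal.antidiagonal m).filter (fun p : ℕ × ℕ => p.1 = p.2) = ∅ := by
      ext p
      simp only [Finset.mem_filter, Finset.HasAntidiagonal.mem_antidiagonal, Finset.notMem_empty, iff_false]
      rintro ⟨h1, h2⟩
      exact h ⟨p.2, by omega⟩
    rw [this]
    simp [h]

private lemma coeff_pow4 (f : PowerSeries (ZMod 2)) (m : ℕ) :
    coeff (R := ZMod 2) m (f ^ 4) = if 4 ∣ m then coeff (R := ZMod 2) (m / 4) f else 0 := by
  have h4 : f ^ 4 = (f * f) * (f * f) := by ring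
  rw [h4, coeff_mul_self]
  by_cases h : 2 ∣ m
  · rw [if_pos h, coeff_mul_self]
    by_cases h' : 4 ∣ m
    · rw [if_pos (by omega : 2 ∣ m / 2), if_pos h']
      have : m / 2 / 2 = m / 4 := by omega
      rw [this]
    · rw [if_neg (by omega : ¬ 2 ∣ m / 2), if_neg h']
  · rw [if_neg h, if_neg (by omega : ¬ 4 ∣ m)]

private lemma coeff_pow8 (f : PowerSeries (ZMod 2)) (m : ℕ) :
    coeff (R := ZMod 2) m (f ^ 8) = if 8 ∣ m then coeff (R := ZMod 2) (m / 8) f else 0 := by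
  have h8 : f ^ 8 = (f ^ 4) * (f ^ 4) := by ring
  rw [h8, coeff_mul_self]
  by_cases h : 2 ∣ m
  · rw [if_pos h, coeff_pow4]
    by_cases h' : 8 ∣ m
    · rw [if_pos (by omega : 4 ∣ m / 2), if_pos h']
      have : m / 2 / 4 = m / 8 := by omega
      rw [this]
    · rw [if_neg (by omega : ¬ 4 ∣ m / 2), if_neg h']
  · rw [if_neg h, if_neg (by omega : ¬ 8 ∣ m)]

private lemma sqres (x : ℕ) :
    (x % 2 = 0 ∧ (x^2 % 8 = 0 ∨ x^2 % 8 = 4)) ∨ (x % 2 = 1 ∧ x^2 % 8 = 1) := by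
  have h : x^2 % 8 = (x % 8)^2 % 8 := by rw [Nat.pow_mod]
  have h2 : x % 2 = (x % 8) % 2 := by omega
  have h3 : x % 8 < 8 := Nat.mod_lt _ (by norm_num)
  interval_cases h4 : x % 8 <;> omega

private lemma isSquare_even_iff (m : ℕ) (hm : m % 2 = 0) :
    IsSquare m ↔ (4 ∣ m ∧ IsSquare (m / 4)) := by
  constructor
  · rintro ⟨x, rfl⟩
    have hx : x % 2 = 0 := by
      rcases sqres x with ⟨h1, _⟩ | ⟨h1, h2⟩
      · exact h1
      · exfalso; have : x^2 = x * x := sq x; omega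
    obtain ⟨y, rfl⟩ : ∃ y, x = 2 * y := ⟨x / 2, by omega⟩
    have key : (2*y) * (2*y) = 4 * (y*y) := by ring
    rw [key]
    exact ⟨⟨y*y, by omega⟩, ⟨y, by omega⟩⟩
  · rintro ⟨h4, y, hy⟩
    obtain ⟨k, rfl⟩ := h4
    have : k = y * y := by omega
    exact ⟨2*y, by rw [this]; ring⟩

private lemma isSquare_odd_mod8 (m : ℕ) (hm : m % 2 = 1) (h : IsSquare m) : m % 8 = 1 := by
  obtain ⟨x, rfl⟩ := h
  rcases sqres x with ⟨h1, h2⟩ | ⟨h1, h2⟩ <;>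
    · have : x^2 = x * x := sq x; omega

private lemma coeff_g (m : ℕ) : coeff (R := ZMod 2) m g = if IsSquare m then 1 else 0 := by
  rw [g, coeff_mk]

private lemma g_const : constantCoeff (R := ZMod 2) g ≠ 0 := by
  rw [← coeff_zero_eq_constantCoeff, coeff_g]
  have h0 : IsSquare (0:ℕ) := ⟨0, rfl⟩
  rw [if_pos h0]
  decide

private lemma g_inv_mul : g⁻¹ * g = 1 := PowerSeries.inv_mul_cancel g g_const

private lemma g_mul_inv : g * g⁻¹ = 1 := by rw [mul_comm]; exact g_inv_mul

private lemma g_ne : g ≠ 0 := by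
  intro h
  exact g_const (by rw [h]; simp)

private lemma coeff_h (m : ℕ) (hm : m % 8 ≠ 1) : coeff (R := ZMod 2) m (g + g^4) = 0 := by
  rw [map_add, coeff_pow4, coeff_g]
  by_cases h2 : m % 2 = 1
  · rw [if_neg (fun hs => hm (isSquare_odd_mod8 m h2 hs)), if_neg (by omega : ¬ 4 ∣ m)]
    simp
  · have h2' : m % 2 = 0 := by omega
    by_cases h4 : 4 ∣ m
    · rw [if_pos h4, coeff_g]
      by_cases hs : IsSquare m
      · rw [if_pos hs, if_pos (((isSquare_even_iff m h2').mp hs).2)]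
        decide
      · rw [if_neg hs, if_neg (fun hs4 => hs ((isSquare_even_iff m h2').mpr ⟨h4, hs4⟩))]
        simp
    · rw [if_neg h4, if_neg (fun hs => h4 (((isSquare_even_iff m h2').mp hs).1))]
      simp

private lemma add_pow_four (a b : PowerSeries (ZMod 2)) : (a+b)^4 = a^4 + b^4 := by
  haveI : Fact (Nat.Prime 2) := ⟨Nat.prime_two⟩
  have h1 : (a+b)^4 = ((a+b)^2)^2 := by ring
  rw [h1, add_pow_char a b 2, add_pow_char (a^2) (b^2) 2]
  ring

private lemma identJ : g⁻¹ = g^11 + (g+g^4)^4 * g^3 * (g⁻¹)^8 := by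
  apply mul_left_cancel₀ (pow_ne_zero 8 g_ne)
  have h1 : g^8 * g⁻¹ = g^7 := by
    have : g^8 * g⁻¹ = g^7 * (g * g⁻¹) := by ring
    rw [this, g_mul_inv, mul_one]
  have h2 : g^8 * (g^11 + (g+g^4)^4 * g^3 * (g⁻¹)^8)
      = g^19 + (g+g^4)^4 * g^3 * (g * g⁻¹)^8 := by ring
  rw [h1, h2, g_mul_inv, one_pow, mul_one, add_pow_four]
  have : (g^4 + (g^4)^4) * g^3 = g^7 + g^19 := by ring
  rw [this]
  have : g^19 + (g^7 + g^19) = g^7 + (g^19 + g^19) := by ring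
  rw [this, CharTwo.add_self_eq_zero, add_zero]

private lemma g3_supp (b : ℕ) (hb : b % 8 = 7) : coeff (R := ZMod 2) b (g^3) = 0 := by
  have h3 : g^3 = g * (g * g) := by ring
  rw [h3, coeff_mul]
  apply Finset.sum_eq_zero
  intro p hp
  rw [Finset.HasAntidiagonal.mem_antidiagonal] at hp
  rw [coeff_g, coeff_mul_self]
  by_cases h1 : IsSquare p.1
  · rw [if_pos h1]
    by_cases h2 : 2 ∣ p.2
    · rw [if_pos h2, coeff_g]
      by_cases hs : IsSquare (p.2 / 2)
      · exfalso
        obtain ⟨x, hx⟩ := h1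
        obtain ⟨y, hy⟩ := hs
        have hx2 : p.1 = x^2 := by rw [hx]; ring
        have hy2 : p.2 / 2 = y^2 := by rw [hy]; ring
        have hA := sqres x
        have hB := sqres y
        omega
      · rw [if_neg hs, mul_zero]
    · rw [if_neg h2, mul_zero]
  · rw [if_neg h1, zero_mul]

private lemma hP_supp (a : ℕ) (ha : coeff (R := ZMod 2) a ((g+g^4)^4) ≠ 0) : a % 8 = 4 := by
  rw [coeff_pow4] at ha
  by_cases h4 : 4 ∣ a
  · rw [if_pos h4] at ha
    have : (a / 4) % 8 = 1 := by
      by_contra hc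
      exact ha (coeff_h _ hc)
    omega
  · rw [if_neg h4] at ha
    exact absurd rfl ha

private lemma main_supp (n : ℕ) (hn : n % 8 = 3) :
    coeff (R := ZMod 2) n ((g+g^4)^4 * g^3 * (g⁻¹)^8) = 0 := by
  rw [coeff_mul]
  apply Finset.sum_eq_zero
  intro p hp
  rw [Finset.HasAntidiagonal.mem_antidiagonal] at hp
  by_cases h8 : 8 ∣ p.2
  · have hi : p.1 % 8 = 3 := by omega
    have : coeff (R := ZMod 2) p.1 ((g+g^4)^4 * g^3) = 0 := by
      rw [coeff_mul]
      apply Finset.sum_eq_zero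
      intro q hq
      rw [Finset.HasAntidiagonal.mem_antidiagonal] at hq
      by_cases hP : coeff (R := ZMod 2) q.1 ((g+g^4)^4) = 0
      · rw [hP, zero_mul]
      · have h4 : q.1 % 8 = 4 := hP_supp q.1 hP
        have : q.2 % 8 = 7 := by omega
        rw [g3_supp q.2 this, mul_zero]
    rw [this, zero_mul]
  · rw [coeff_pow8, if_neg h8, mul_zero]

private lemma coeff_inv_eq_g11 (n : ℕ) (hn : n % 8 = 3) :
    coeff (R := ZMod 2) n g⁻¹ = coeff (R := ZMod 2) n (g^11) := by
  rw [identJ, map_add, main_supp n hn, add_zero]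

private def SNf (n : ℕ) : Finset (ℕ×ℕ×ℕ) :=
  (Finset.range (n+1) ×ˢ Finset.range (n+1) ×ˢ Finset.range (n+1)).filter
    (fun t => n = t.1^2 + 2*t.2.1^2 + 8*t.2.2^2)

private lemma coeff_g2 (j : ℕ) :
    coeff (R := ZMod 2) j (g*g) = if ∃ y, j = 2*y^2 then 1 else 0 := by
  rw [coeff_mul_self]
  by_cases h2 : 2 ∣ j
  · rw [if_pos h2, coeff_g]
    by_cases hs : IsSquare (j/2)
    · obtain ⟨y, hy⟩ := hs
      have hy2 : y * y = y^2 := (sq y).symm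
      rw [if_pos ⟨y, hy⟩, if_pos ⟨y, by omega⟩]
    · rw [if_neg hs, if_neg]
      rintro ⟨y, hy⟩
      exact hs ⟨y, by have : y*y = y^2 := (sq y).symm; omega⟩
  · rw [if_neg h2, if_neg]
    rintro ⟨y, hy⟩
    exact h2 ⟨y^2, by omega⟩

private lemma coeff_g8v (c : ℕ) :
    coeff (R := ZMod 2) c (g^8) = if ∃ k, c = 8*k^2 then 1 else 0 := by
  rw [coeff_pow8]
  by_cases h8 : 8 ∣ c
  · rw [if_pos h8, coeff_g]
    by_cases hs : IsSquare (c/8)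
    · obtain ⟨y, hy⟩ := hs
      have hy2 : y * y = y^2 := (sq y).symm
      rw [if_pos ⟨y, hy⟩, if_pos ⟨y, by omega⟩]
    · rw [if_neg hs, if_neg]
      rintro ⟨y, hy⟩
      exact hs ⟨y, by have : y*y = y^2 := (sq y).symm; omega⟩
  · rw [if_neg h8, if_neg]
    rintro ⟨y, hy⟩
    exact h8 ⟨y^2, by omega⟩

private lemma sq_sqrt' {m : ℕ} (h : IsSquare m) : Nat.sqrt m * Nat.sqrt m = m := by
  obtain ⟨r, rfl⟩ := h
  rw [show r * r = r^2 by ring, Nat.sqrt_eq']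
  ring

private lemma le_of_sq_le {x n : ℕ} (h : x^2 ≤ n) : x ≤ n :=
  le_trans (Nat.le_self_pow two_ne_zero x) h

private lemma coeff_g11 (n : ℕ) : coeff (R := ZMod 2) n (g^11) = ((SNf n).card : ZMod 2) := by
  classical
  have h11 : g^11 = (g * (g*g)) * g^8 := by ring
  rw [h11, coeff_mul]
  have step : ∀ p ∈ Finset.HasAntidiagonal.antidiagonal n,
      coeff (R := ZMod 2) p.1 (g*(g*g)) * coeff (R := ZMod 2) p.2 (g^8)
      = ∑ q ∈ Finset.HasAntidiagonal.antidiagonal p.1,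
          (if (IsSquare q.1 ∧ (∃ y, q.2 = 2*y^2) ∧ (∃ k, p.2 = 8*k^2)) then 1 else 0) := by
    intro p _
    rw [coeff_mul, Finset.sum_mul]
    apply Finset.sum_congr rfl
    intro q _
    rw [coeff_g, coeff_g2, coeff_g8v]
    by_cases h1 : IsSquare q.1 <;> by_cases h2 : ∃ y, q.2 = 2*y^2 <;>
      by_cases h3 : ∃ k, p.2 = 8*k^2 <;> simp [h1, h2, h3]
  rw [Finset.sum_congr rfl step, Finset.sum_sigma', Finset.sum_boole]
  congr 1
  refine Finset.card_bij'
    (fun x _ => (Nat.sqrt x.2.1, Nat.sqrt (x.2.2/2), Nat.sqrt (x.1.2/8)))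
    (fun t _ => ⟨(t.1^2 + 2*t.2.1^2, 8*t.2.2^2), (t.1^2, 2*t.2.1^2)⟩) ?_ ?_ ?_ ?_
  · intro x hx
    simp only [Finset.mem_filter, Finset.mem_sigma, Finset.HasAntidiagonal.mem_antidiagonal] at hx
    obtain ⟨⟨hs1, hs2⟩, hq1, ⟨y, hy⟩, ⟨k, hk⟩⟩ := hx
    have e1 : Nat.sqrt x.2.1 * Nat.sqrt x.2.1 = x.2.1 := sq_sqrt' hq1
    have e2 : Nat.sqrt (x.2.2/2) = y := by
      rw [hy, show 2*y^2/2 = y^2 by omega, Nat.sqrt_eq']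
    have e3 : Nat.sqrt (x.1.2/8) = k := by
      rw [hk, show 8*k^2/8 = k^2 by omega, Nat.sqrt_eq']
    simp only [SNf, Finset.mem_filter, Finset.mem_product, Finset.mem_range]
    have hsum : n = (Nat.sqrt x.2.1)^2 + 2*y^2 + 8*k^2 := by
      have : (Nat.sqrt x.2.1)^2 = x.2.1 := by rw [sq]; exact e1
      omega
    refine ⟨⟨?_, ?_, ?_⟩, ?_⟩
    · have : (Nat.sqrt x.2.1)^2 ≤ n := by omega
      have := le_of_sq_le this; omega
    · have : y^2 ≤ n := by omega
      have := le_of_sq_le this; omega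
    · have : k^2 ≤ n := by omega
      have := le_of_sq_le this; omega
    · rw [e2, e3]; exact hsum
  · intro t ht
    simp only [SNf, Finset.mem_filter, Finset.mem_product, Finset.mem_range] at ht
    simp only [Finset.mem_filter, Finset.mem_sigma, Finset.HasAntidiagonal.mem_antidiagonal]
    refine ⟨⟨by omega, by simp⟩, ⟨t.1, by ring⟩, ⟨t.2.1, rfl⟩, ⟨t.2.2, rfl⟩⟩
  · intro x hx
    simp only [Finset.mem_filter, Finset.mem_sigma, Finset.HasAntidiagonal.mem_antidiagonal] at hx
    obtain ⟨⟨hs1, hs2⟩, hq1, ⟨y, hy⟩, ⟨k, hk⟩⟩ := hx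
    have e1 : (Nat.sqrt x.2.1)^2 = x.2.1 := by rw [sq]; exact sq_sqrt' hq1
    have e2 : Nat.sqrt (x.2.2/2) = y := by
      rw [hy, show 2*y^2/2 = y^2 by omega, Nat.sqrt_eq']
    have e3 : Nat.sqrt (x.1.2/8) = k := by
      rw [hk, show 8*k^2/8 = k^2 by omega, Nat.sqrt_eq']
    obtain ⟨⟨m, c⟩, i, j⟩ := x
    simp only at e1 e2 e3 hy hk hs1 hs2 ⊢
    rw [e2, e3, e1, ← hy, ← hk, hs2]
  · intro t ht
    obtain ⟨a, b, c⟩ := t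
    simp only
    rw [Nat.sqrt_eq', show 2*b^2/2 = b^2 by omega, Nat.sqrt_eq',
      show 8*c^2/8 = c^2 by omega, Nat.sqrt_eq']

private lemma three_sq_three (a b c n : ℕ) (hn : n % 8 = 3) (h : n = a^2 + b^2 + c^2) :
    a % 2 = 1 ∧ b % 2 = 1 ∧ c % 2 = 1 := by
  rcases sqres a with ⟨e1, h1⟩ | ⟨e1, h1⟩ <;> rcases sqres b with ⟨e2, h2⟩ | ⟨e2, h2⟩ <;>
    rcases sqres c with ⟨e3, h3⟩ | ⟨e3, h3⟩ <;> omega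

private lemma two_sq_three (x y k n : ℕ) (hn : n % 8 = 3) (h : n = x^2 + 2*y^2 + 8*k^2) :
    x % 2 = 1 ∧ y % 2 = 1 := by
  rcases sqres x with ⟨e1, h1⟩ | ⟨e1, h1⟩ <;> rcases sqres y with ⟨e2, h2⟩ | ⟨e2, h2⟩ <;> omega

private def S1f (n : ℕ) : Finset (ℕ×ℕ×ℕ) :=
  (Finset.range (n+1) ×ˢ Finset.range (n+1) ×ˢ Finset.range (n+1)).filter
    (fun t => n = t.1^2 + t.2.1^2 + t.2.2^2)

private def S2f (n : ℕ) : Finset (ℕ×ℕ) :=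
  (Finset.range (n+1) ×ˢ Finset.range (n+1)).filter (fun p => n = p.1^2 + 2*p.2^2)

private lemma cardR1 (n : ℕ) :
    Nat.card {t : ℕ × ℕ × ℕ // n = t.1 ^ 2 + t.2.1 ^ 2 + t.2.2 ^ 2} = (S1f n).card := by
  rw [← Nat.card_eq_finsetCard]
  apply Nat.card_congr
  apply Equiv.subtypeEquivRight
  intro t
  simp only [S1f, Finset.mem_filter, Finset.mem_product, Finset.mem_range]
  constructor
  · intro h
    refine ⟨⟨?_, ?_, ?_⟩, h⟩
    · have : t.1^2 ≤ n := by omega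
      have := le_of_sq_le this; omega
    · have : t.2.1^2 ≤ n := by omega
      have := le_of_sq_le this; omega
    · have : t.2.2^2 ≤ n := by omega
      have := le_of_sq_le this; omega
  · exact fun h => h.2

private lemma cardR2 (n : ℕ) :
    Nat.card {p : ℕ × ℕ // n = p.1 ^ 2 + 2 * p.2 ^ 2} = (S2f n).card := by
  rw [← Nat.card_eq_finsetCard]
  apply Nat.card_congr
  apply Equiv.subtypeEquivRight
  intro p
  simp only [S2f, Finset.mem_filter, Finset.mem_product, Finset.mem_range]
  constructor
  · intro h
    refine ⟨⟨?_, ?_⟩, h⟩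
    · have : p.1^2 ≤ n := by omega
      have := le_of_sq_le this; omega
    · have : p.2^2 ≤ n := by
        have : p.2^2 ≤ 2*p.2^2 := by omega
        omega
      have := le_of_sq_le this; omega
  · exact fun h => h.2

private lemma b1 (n : ℕ) :
    ((SNf n).filter (fun t => t.2.2 = 0)).card = (S2f n).card := by
  refine Finset.card_bij' (fun t _ => (t.1, t.2.1)) (fun p _ => (p.1, p.2, 0)) ?_ ?_ ?_ ?_
  · intro t ht
    simp only [SNf, Finset.mem_filter, Finset.mem_product, Finset.mem_range] at ht
    obtain ⟨⟨⟨hb1, hb2, hb3⟩, heq⟩, hk0⟩ := ht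
    simp only [S2f, Finset.mem_filter, Finset.mem_product, Finset.mem_range]
    refine ⟨⟨hb1, hb2⟩, ?_⟩
    rw [hk0] at heq
    omega
  · intro p hp
    simp only [S2f, Finset.mem_filter, Finset.mem_product, Finset.mem_range] at hp
    simp only [SNf, Finset.mem_filter, Finset.mem_product, Finset.mem_range]
    exact ⟨⟨⟨hp.1.1, hp.1.2, by omega⟩, by have := hp.2; omega⟩, trivial⟩
  · intro t ht
    simp only [SNf, Finset.mem_filter] at ht
    obtain ⟨a, b, c⟩ := t
    simp only at ht ⊢
    rw [← ht.2]
  · intro p _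
    rfl

private lemma b2 (n : ℕ) :
    ((S1f n).filter (fun t => t.1 = t.2.1)).card = (S2f n).card := by
  refine Finset.card_bij' (fun t _ => (t.2.2, t.1)) (fun p _ => (p.2, p.2, p.1)) ?_ ?_ ?_ ?_
  · intro t ht
    simp only [S1f, Finset.mem_filter, Finset.mem_product, Finset.mem_range] at ht
    obtain ⟨⟨⟨hb1, hb2, hb3⟩, heq⟩, hd⟩ := ht
    simp only [S2f, Finset.mem_filter, Finset.mem_product, Finset.mem_range]
    refine ⟨⟨hb3, hb1⟩, ?_⟩
    rw [← hd] at heq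
    omega
  · intro p hp
    simp only [S2f, Finset.mem_filter, Finset.mem_product, Finset.mem_range] at hp
    simp only [S1f, Finset.mem_filter, Finset.mem_product, Finset.mem_range]
    exact ⟨⟨⟨hp.1.2, hp.1.2, hp.1.1⟩, by have := hp.2; omega⟩, trivial⟩
  · intro t ht
    simp only [S1f, Finset.mem_filter] at ht
    obtain ⟨a, b, c⟩ := t
    simp only at ht ⊢
    rw [ht.2]
  · intro p _
    rfl

private lemma b3swap (n : ℕ) :
    ((S1f n).filter (fun t => t.2.1 < t.1)).card
      = ((S1f n).filter (fun t => t.1 < t.2.1)).card := by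
  refine Finset.card_bij' (fun t _ => (t.2.1, t.1, t.2.2)) (fun t _ => (t.2.1, t.1, t.2.2))
    ?_ ?_ ?_ ?_
  · intro t ht
    simp only [S1f, Finset.mem_filter, Finset.mem_product, Finset.mem_range] at ht ⊢
    refine ⟨⟨⟨ht.1.1.2.1, ht.1.1.1, ht.1.1.2.2⟩, by omega⟩, ht.2⟩
  · intro t ht
    simp only [S1f, Finset.mem_filter, Finset.mem_product, Finset.mem_range] at ht ⊢
    refine ⟨⟨⟨ht.1.1.2.1, ht.1.1.1, ht.1.1.2.2⟩, by omega⟩, ht.2⟩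
  · intro t _; rfl
  · intro t _; rfl

private lemma b3a (n : ℕ) (hn : n % 8 = 3) :
    ((S1f n).filter (fun t => t.1 < t.2.1)).card
      = ((SNf n).filter (fun t => t.2.2 ≠ 0)).card := by
  refine Finset.card_bij'
    (fun t _ => (t.2.2,
      (if (t.2.1 - t.1) % 4 = 0 then (t.1 + t.2.1)/2 else (t.2.1 - t.1)/2),
      (if (t.2.1 - t.1) % 4 = 0 then (t.2.1 - t.1)/4 else (t.1 + t.2.1)/4)))
    (fun p _ => (p.2.1 + 2*p.2.2 - 2 * min p.2.1 (2*p.2.2), p.2.1 + 2*p.2.2, p.1))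
    ?_ ?_ ?_ ?_
  · -- forward membership
    intro t ht
    obtain ⟨a, b, c⟩ := t
    simp only [S1f, Finset.mem_filter, Finset.mem_product, Finset.mem_range] at ht
    obtain ⟨⟨⟨hb1, hb2, hb3⟩, heq⟩, hab⟩ := ht
    obtain ⟨ha2, hb2', -⟩ := three_sq_three a b c n hn heq
    simp only [SNf, Finset.mem_filter, Finset.mem_product, Finset.mem_range]
    by_cases h4 : (b - a) % 4 = 0
    · obtain ⟨e, he⟩ : ∃ e, a = 2*e+1 := ⟨a/2, by omega⟩
      obtain ⟨d, hd⟩ : ∃ d, b = 2*e+1+4*d := ⟨(b-a)/4, by omega⟩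
      subst he; subst hd
      have hy : (2*e+1 + (2*e+1+4*d))/2 = 2*e+2*d+1 := by omega
      have hk : ((2*e+1+4*d) - (2*e+1))/4 = d := by omega
      rw [if_pos h4, if_pos h4, hy, hk]
      have key : (2*e+1)^2 + (2*e+1+4*d)^2 = 2*(2*e+2*d+1)^2 + 8*d^2 := by ring
      have hneq : n = c^2 + 2*(2*e+2*d+1)^2 + 8*d^2 := by omega
      have hyb : (2*e+2*d+1) ≤ n := by
        have h1 : (2*e+2*d+1)^2 ≤ n := by omega
        exact le_of_sq_le h1
      have hkb : d ≤ n := by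
        have h1 : d^2 ≤ n := by omega
        exact le_of_sq_le h1
      exact ⟨⟨⟨by omega, by omega, by omega⟩, hneq⟩, by omega⟩
    · obtain ⟨e, he⟩ : ∃ e, a = 2*e+1 := ⟨a/2, by omega⟩
      obtain ⟨d, hd⟩ : ∃ d, b = 2*e+4*d+3 := ⟨(b-a-2)/4, by omega⟩
      subst he; subst hd
      have hy : ((2*e+4*d+3) - (2*e+1))/2 = 2*d+1 := by omega
      have hk : ((2*e+1) + (2*e+4*d+3))/4 = e+d+1 := by omega
      rw [if_neg h4, if_neg h4, hy, hk]
      have key : (2*e+1)^2 + (2*e+4*d+3)^2 = 2*(2*d+1)^2 + 8*(e+d+1)^2 := by ring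
      have hneq : n = c^2 + 2*(2*d+1)^2 + 8*(e+d+1)^2 := by omega
      have hyb : (2*d+1) ≤ n := by
        have h1 : (2*d+1)^2 ≤ n := by omega
        exact le_of_sq_le h1
      have hkb : e+d+1 ≤ n := by
        have h1 : (e+d+1)^2 ≤ n := by omega
        exact le_of_sq_le h1
      exact ⟨⟨⟨by omega, by omega, by omega⟩, hneq⟩, by omega⟩
  · -- backward membership
    intro p hp
    obtain ⟨x, y, k⟩ := p
    simp only [SNf, Finset.mem_filter, Finset.mem_product, Finset.mem_range] at hp
    obtain ⟨⟨⟨hb1, hb2, hb3⟩, heq⟩, hk0⟩ := hp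
    obtain ⟨hx2, hy2⟩ := two_sq_three x y k n hn heq
    simp only [S1f, Finset.mem_filter, Finset.mem_product, Finset.mem_range]
    by_cases hc : 2*k ≤ y
    · obtain ⟨s, hs⟩ : ∃ s, y = s + 2*k := ⟨y - 2*k, by omega⟩
      subst hs
      have hv : s + 2*k + 2*k - 2 * min (s + 2*k) (2*k) = s := by omega
      rw [hv]
      have key : s^2 + (s+2*k+2*k)^2 + x^2 = x^2 + 2*(s+2*k)^2 + 8*k^2 := by ring
      have hneq : n = s^2 + (s + 2*k + 2*k)^2 + x^2 := by omega
      have hub : s + 2*k + 2*k ≤ n := by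
        have h1 : (s+2*k+2*k)^2 ≤ n := by omega
        exact le_of_sq_le h1
      exact ⟨⟨⟨by omega, by omega, by omega⟩, hneq⟩, by omega⟩
    · obtain ⟨s, hs⟩ : ∃ s, 2*k = s + y := ⟨2*k - y, by omega⟩
      have hv : y + 2*k - 2 * min y (2*k) = s := by omega
      rw [hv]
      have hss : s = 2*k - y := by omega
      have key : s^2 + (y + (s+y))^2 + x^2 = x^2 + 2*y^2 + 8*(((s+y)/2))^2 := by
        have h2k : (s+y)/2 * 2 = s + y := by omega
        nlinarith [h2k]
      have hneq : n = s^2 + (y + 2*k)^2 + x^2 := by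
        have h1 : y + (s + y) = y + 2*k := by omega
        have h2 : (s+y)/2 = k := by omega
        rw [h1, h2] at key
        omega
      have hub : y + 2*k ≤ n := by
        have h1 : (y+2*k)^2 ≤ n := by omega
        exact le_of_sq_le h1
      exact ⟨⟨⟨by omega, by omega, by omega⟩, hneq⟩, by omega⟩
  · -- left inverse
    intro t ht
    obtain ⟨a, b, c⟩ := t
    simp only [S1f, Finset.mem_filter, Finset.mem_product, Finset.mem_range] at ht
    obtain ⟨⟨⟨hb1, hb2, hb3⟩, heq⟩, hab⟩ := ht
    obtain ⟨ha2, hb2', -⟩ := three_sq_three a b c n hn heq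
    simp only [Prod.mk.injEq]
    by_cases h4 : (b - a) % 4 = 0
    · rw [if_pos h4, if_pos h4]
      refine ⟨?_, ?_, trivial⟩ <;> omega
    · rw [if_neg h4, if_neg h4]
      refine ⟨?_, ?_, trivial⟩ <;> omega
  · -- right inverse
    intro p hp
    obtain ⟨x, y, k⟩ := p
    simp only [SNf, Finset.mem_filter, Finset.mem_product, Finset.mem_range] at hp
    obtain ⟨⟨⟨hb1, hb2, hb3⟩, heq⟩, hk0⟩ := hp
    obtain ⟨hx2, hy2⟩ := two_sq_three x y k n hn heq
    simp only [Prod.mk.injEq]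
    by_cases hc : 2*k ≤ y
    · have hv : y + 2*k - 2 * min y (2*k) = y - 2*k := by omega
      have hd : (y + 2*k - (y + 2*k - 2 * min y (2*k))) % 4 = 0 := by omega
      rw [hv] at hd ⊢
      rw [if_pos hd, if_pos hd]
      refine ⟨trivial, ?_, ?_⟩ <;> omega
    · have hv : y + 2*k - 2 * min y (2*k) = 2*k - y := by omega
      have hd : ¬ (y + 2*k - (y + 2*k - 2 * min y (2*k))) % 4 = 0 := by omega
      rw [hv] at hd ⊢
      rw [if_neg hd, if_neg hd]
      refine ⟨trivial, ?_, ?_⟩ <;> omega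

theorem stmt4 (n : ℕ) (hn : n % 8 = 3)
    (R₁ R₂ : ℕ)
    (hR₁ : R₁ = Nat.card {t : ℕ × ℕ × ℕ // n = t.1 ^ 2 + t.2.1 ^ 2 + t.2.2 ^ 2})
    (hR₂ : R₂ = Nat.card {p : ℕ × ℕ // n = p.1 ^ 2 + 2 * p.2 ^ 2})
    (h₁ : 4 ∣ R₁) (h₂ : 4 ∣ R₂) :
    n ∉ B := by
  intro hB
  have hB' : coeff (R := ZMod 2) n g⁻¹ = 1 := hB
  -- the counting identity
  have hsplitN := Finset.card_filter_add_card_filter_not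
    (s := SNf n) (p := fun t => t.2.2 = 0)
  have hsplit1 := Finset.card_filter_add_card_filter_not
    (s := S1f n) (p := fun t => t.1 = t.2.1)
  have hunion : (S1f n).filter (fun t => ¬ t.1 = t.2.1)
      = ((S1f n).filter (fun t => t.1 < t.2.1)) ∪ ((S1f n).filter (fun t => t.2.1 < t.1)) := by
    ext t
    simp only [Finset.mem_filter, Finset.mem_union]
    by_cases h : t ∈ S1f n
    · simp only [h, true_and]
      omega
    · simp [h]
  have hdisj : Disjoint ((S1f n).filter (fun t => t.1 < t.2.1))
      ((S1f n).filter (fun t => t.2.1 < t.1)) := by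
    rw [Finset.disjoint_left]
    intro t ht1 ht2
    simp only [Finset.mem_filter] at ht1 ht2
    omega
  have hOcard : ((S1f n).filter (fun t => ¬ t.1 = t.2.1)).card
      = ((S1f n).filter (fun t => t.1 < t.2.1)).card
        + ((S1f n).filter (fun t => t.2.1 < t.1)).card := by
    rw [hunion, Finset.card_union_of_disjoint hdisj]
  have e1 := b1 n
  have e2 := b2 n
  have e3 := b3a n hn
  have e4 := b3swap n
  have key : 2 * (SNf n).card = (S1f n).card + (S2f n).card := by
    have hneg : ((SNf n).filter (fun t => ¬ t.2.2 = 0)).card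
        = ((SNf n).filter (fun t => t.2.2 ≠ 0)).card := rfl
    omega
  have hdvd : 2 ∣ (SNf n).card := by
    rw [cardR1] at hR₁
    rw [cardR2] at hR₂
    omega
  have hzero : ((SNf n).card : ZMod 2) = 0 := by
    obtain ⟨m, hm⟩ := hdvd
    rw [hm, Nat.cast_mul, ZMod.natCast_self, zero_mul]
  rw [coeff_inv_eq_g11 n hn, coeff_g11, hzero] at hB'
  exact absurd hB' (by decide)
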